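/- For any matrices M_1, ..., M_{p+1} in GL(n, ℂ) with M_1 ⋯ M_{p+1} = I that form an irreducible tuple, and for any b_1, ..., b_{p+1} ∈ ℂ* with b_1 ⋯ b_{p+1} = 1, one has rank(b_1 M_1 − I) + ⋯ + rank(b_{p+1} M_{p+1} − I) ≥ 2n. -/

import Mathlib

open Matrix

lemma aux_ofFn_smul_prod {n : ℕ} : ∀ (k : ℕ) (b : Fin k → ℂ)
    (M : Fin k → Matrix (Fin n) (Fin n) ℂ),
    (List.ofFn fun j => b j • M j).prod = (∏ j, b j) • (List.ofFn M).prod := by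
  intro k
  induction k with
  | zero => intro b M; simp
  | succ k ih =>
    intro b M
    rw [List.ofFn_succ, List.ofFn_succ, List.prod_cons, List.prod_cons,
      ih (fun j => b j.succ) (fun j => M j.succ), Fin.prod_univ_succ,
      smul_mul_assoc, mul_smul_comm, smul_smul]

theorem stmt15 (p n : ℕ) (hn : 2 ≤ n) (M : Fin (p + 1) → Matrix (Fin n) (Fin n) ℂ)
    (hinv : ∀ j, IsUnit (M j))
    (hprod : (List.ofFn M).prod = 1)
    (hirr : ∀ V : Submodule ℂ (Fin n → ℂ),
      (∀ j, ∀ v ∈ V, Matrix.toLin' (M j) v ∈ V) → V = ⊥ ∨ V = ⊤)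
    (b : Fin (p + 1) → ℂ) (hb : ∀ j, b j ≠ 0) (hbp : ∏ j, b j = 1) :
    2 * n ≤ ∑ j, (b j • M j - 1).rank := by
  classical
  set N : Fin (p + 1) → Matrix (Fin n) (Fin n) ℂ := fun j => b j • M j with hN
  have hNprod : (List.ofFn N).prod = 1 := by
    rw [hN, aux_ofFn_smul_prod, hbp, hprod, one_smul]
  set T : Fin (p + 1) → ((Fin n → ℂ) →ₗ[ℂ] (Fin n → ℂ)) :=
    fun j => (N j - 1).mulVecLin with hT
  have hTapply : ∀ j v, T j v = N j *ᵥ v - v := by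
    intro j v
    show (N j - 1) *ᵥ v = _
    rw [Matrix.sub_mulVec, Matrix.one_mulVec]
  have hMv : ∀ j (v : Fin n → ℂ), M j *ᵥ v = (b j)⁻¹ • (N j *ᵥ v) := by
    intro j v
    rw [hN]
    simp only [Matrix.smul_mulVec, smul_smul, inv_mul_cancel₀ (hb j), one_smul]
  -- if all N j = 1 then all M j are scalar, contradicting irreducibility
  have hscalar : ¬ (∀ j, N j = 1) := by
    intro hall
    have hMj : ∀ j (v : Fin n → ℂ), Matrix.toLin' (M j) v = (b j)⁻¹ • v := by
      intro j v
      rw [Matrix.toLin'_apply, hMv j v, hall j, Matrix.one_mulVec]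
    set e : Fin n → ℂ := Pi.single (⟨0, by omega⟩ : Fin n) 1 with he
    have hne : e ≠ 0 := by
      intro h
      have := congrFun h ⟨0, by omega⟩
      simp [he] at this
    rcases hirr (Submodule.span ℂ {e}) (by
      intro j v hv
      rw [hMj j v]
      exact Submodule.smul_mem _ _ hv) with h | h
    · rw [Submodule.span_singleton_eq_bot] at h; exact hne h
    · have h1 : Module.finrank ℂ (Submodule.span ℂ ({e} : Set (Fin n → ℂ))) = 1 :=
        finrank_span_singleton hne
      rw [h, finrank_top, Module.finrank_pi] at h1
      simp at h1
      omega
  have hNone : ∀ j, (∀ v, T j v = 0) → N j = 1 := by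
    intro j hv
    apply Matrix.toLin'.injective
    apply LinearMap.ext
    intro v
    have h2 := hTapply j v
    rw [hv v] at h2
    have h3 : N j *ᵥ v = v := sub_eq_zero.mp h2.symm
    rw [Matrix.toLin'_apply, h3, Matrix.toLin'_one]
    rfl
  -- common kernel is trivial
  have hKer : (⨅ j, LinearMap.ker (T j)) = ⊥ := by
    have hinvar : ∀ j, ∀ v ∈ ⨅ i, LinearMap.ker (T i),
        Matrix.toLin' (M j) v ∈ ⨅ i, LinearMap.ker (T i) := by
      intro j v hv
      have hv' : ∀ i, T i v = 0 := fun i => (Submodule.mem_iInf _).mp hv i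
      have hNvj : N j *ᵥ v = v := by
        have h2 := hTapply j v
        rw [hv' j] at h2
        exact sub_eq_zero.mp h2.symm
      rw [Matrix.toLin'_apply, hMv j v, hNvj]
      exact Submodule.smul_mem _ _ hv
    rcases hirr _ hinvar with h | h
    · exact h
    · exfalso
      apply hscalar
      intro j
      apply hNone j
      intro v
      have hv : v ∈ ⨅ i, LinearMap.ker (T i) := h ▸ Submodule.mem_top
      exact (Submodule.mem_iInf _).mp hv j
  -- the sum of ranges is everything
  have hU : (⨆ j, LinearMap.range (T j)) = ⊤ := by
    have hinvar : ∀ j, ∀ v ∈ ⨆ i, LinearMap.range (T i),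
        Matrix.toLin' (M j) v ∈ ⨆ i, LinearMap.range (T i) := by
      intro j v hv
      rw [Matrix.toLin'_apply, hMv j v]
      have hNv : N j *ᵥ v = v + T j v := by rw [hTapply]; abel
      rw [hNv]
      refine Submodule.smul_mem _ _ (Submodule.add_mem _ hv ?_)
      exact Submodule.mem_iSup_of_mem j (LinearMap.mem_range_self _ v)
    rcases hirr _ hinvar with h | h
    · exfalso
      apply hscalar
      intro j
      apply hNone j
      intro v
      have h2 : T j v ∈ (⨆ i, LinearMap.range (T i)) :=
        Submodule.mem_iSup_of_mem j (LinearMap.mem_range_self _ v)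
      rw [h] at h2
      simpa using h2
    · exact h
  -- partial products
  set N' : ℕ → Matrix (Fin n) (Fin n) ℂ :=
    fun k => if h : k < p + 1 then N ⟨k, h⟩ else 1 with hN'
  set D : ℕ → Matrix (Fin n) (Fin n) ℂ :=
    fun k => ((List.ofFn N).take k).prod with hD
  have hD0 : D 0 = 1 := by simp [hD]
  have hDsucc : ∀ k, k < p + 1 → D (k + 1) = D k * N' k := by
    intro k hk
    have hlen : k < (List.ofFn N).length := by simpa using hk
    rw [hD]
    simp only
    rw [List.take_succ, List.getElem?_eq_getElem hlen, List.prod_append]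
    simp only [Option.toList_some, List.prod_cons, List.prod_nil, mul_one, List.getElem_ofFn]
    rw [hN']
    simp only [hk, dif_pos]
  have hDtop : D (p + 1) = 1 := by
    rw [hD]
    simp only
    rw [List.take_of_length_le (by simp), hNprod]
  have htel : ∀ k, k ≤ p + 1 → ∑ j ∈ Finset.range k, D j * (N' j - 1) = D k - 1 := by
    intro k
    induction k with
    | zero => intro _; simp [hD0]
    | succ k ih =>
      intro hk
      rw [Finset.sum_range_succ, ih (by omega), hDsucc k (by omega)]
      noncomm_ring
  have hDsum : ∑ j : Fin (p + 1), D j.val * (N j - 1) = 0 := by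
    have h1 : ∑ j ∈ Finset.range (p + 1), D j * (N' j - 1) = 0 := by
      rw [htel (p + 1) le_rfl, hDtop, sub_self]
    rw [← Fin.sum_univ_eq_sum_range (fun j => D j * (N' j - 1)) (p + 1)] at h1
    rw [← h1]
    apply Finset.sum_congr rfl
    intro j _
    congr 2
    rw [hN']
    simp [j.isLt]
  -- the two linear maps
  set W : Fin (p + 1) → Submodule ℂ (Fin n → ℂ) := fun j => LinearMap.range (T j) with hW
  set α : (Fin n → ℂ) →ₗ[ℂ] (Π j, W j) := LinearMap.pi (fun j => (T j).rangeRestrict) with hα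
  set β : (Π j : Fin (p + 1), W j) →ₗ[ℂ] (Fin n → ℂ) :=
    ∑ j, (D j.val).mulVecLin ∘ₗ (W j).subtype ∘ₗ LinearMap.proj j with hβ
  have hβapply : ∀ w, β w = ∑ j, D j.val *ᵥ (w j : Fin n → ℂ) := by
    intro w
    rw [hβ]
    simp [LinearMap.sum_apply, Matrix.mulVecLin_apply]
  have hsummv : ∀ (v : Fin n → ℂ) (f : Fin (p + 1) → Matrix (Fin n) (Fin n) ℂ),
      (∑ j, f j) *ᵥ v = ∑ j, f j *ᵥ v := by
    intro v f
    induction (Finset.univ : Finset (Fin (p + 1))) using Finset.induction with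
    | empty => simp [Matrix.zero_mulVec]
    | insert a s h ih => rw [Finset.sum_insert h, Finset.sum_insert h, Matrix.add_mulVec, ih]
  have hβα : ∀ v, β (α v) = 0 := by
    intro v
    rw [hβapply]
    have h2 : ∀ j : Fin (p + 1), D j.val *ᵥ ((α v j : Fin n → ℂ)) = (D j.val * (N j - 1)) *ᵥ v := by
      intro j
      have h3 : (α v j : Fin n → ℂ) = T j v := rfl
      rw [h3, ← Matrix.mulVec_mulVec]
      rfl
    rw [Finset.sum_congr rfl (fun j _ => h2 j), ← hsummv, hDsum, Matrix.zero_mulVec]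
  have hαker : LinearMap.ker α = ⊥ := by
    rw [eq_bot_iff]
    intro v hv
    have h2 : α v = 0 := hv
    have h3 : v ∈ ⨅ j, LinearMap.ker (T j) := by
      rw [Submodule.mem_iInf]
      intro j
      have h4 : (α v) j = 0 := by rw [h2]; rfl
      exact congrArg Subtype.val h4
    rw [hKer] at h3
    exact h3
  -- surjectivity of β
  have hS1 : ∀ (j : Fin (p + 1)) (w : W j),
      D j.val *ᵥ (w : Fin n → ℂ) ∈ LinearMap.range β := by
    intro j w
    refine ⟨Pi.single j w, ?_⟩
    rw [hβapply]
    rw [Finset.sum_eq_single j]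
    · rw [Pi.single_eq_same]
    · intro i _ hij
      rw [Pi.single_eq_of_ne hij]
      simp [Matrix.mulVec_zero]
    · intro h; exact absurd (Finset.mem_univ j) h
  have hS2 : ∀ k, k ≤ p + 1 → ∀ v, (D k - 1) *ᵥ v ∈ LinearMap.range β := by
    intro k
    induction k with
    | zero => intro _ v; rw [hD0]; simp
    | succ k ih =>
      intro hk v
      have hk' : k < p + 1 := by omega
      have e1 : (D (k + 1) - 1) *ᵥ v = D k *ᵥ (T ⟨k, hk'⟩ v) + (D k - 1) *ᵥ v := by
        rw [hDsucc k hk']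
        have hNk : N' k = N ⟨k, hk'⟩ := dif_pos hk'
        rw [hNk, hTapply, Matrix.sub_mulVec, Matrix.sub_mulVec, Matrix.one_mulVec,
          Matrix.mulVec_sub, ← Matrix.mulVec_mulVec]
        abel
      rw [e1]
      exact Submodule.add_mem _ (hS1 ⟨k, hk'⟩ ⟨T ⟨k, hk'⟩ v, LinearMap.mem_range_self _ v⟩)
        (ih (by omega) v)
  have hWβ : ∀ j, W j ≤ LinearMap.range β := by
    intro j v hv
    obtain ⟨u, rfl⟩ := hv
    have e2 : T j u = D j.val *ᵥ (T j u) - (D j.val - 1) *ᵥ (T j u) := by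
      rw [Matrix.sub_mulVec, Matrix.one_mulVec]
      abel
    rw [e2]
    exact Submodule.sub_mem _ (hS1 j ⟨T j u, LinearMap.mem_range_self _ u⟩)
      (hS2 j.val (by omega) _)
  have hβsurj : LinearMap.range β = ⊤ := by
    rw [eq_top_iff]
    exact le_trans (le_of_eq hU.symm) (iSup_le hWβ)
  -- counting
  have hVfin : Module.finrank ℂ (Fin n → ℂ) = n := by
    rw [Module.finrank_pi]
    simp
  have hsum_eq : ∑ j, Module.finrank ℂ (W j) = Module.finrank ℂ (Π j, W j) :=
    (Module.finrank_pi_fintype ℂ).symm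
  have hcount1 : Module.finrank ℂ (Π j, W j)
      = n + Module.finrank ℂ (LinearMap.ker β) := by
    have h5 := LinearMap.finrank_range_add_finrank_ker β
    rw [hβsurj, finrank_top, hVfin] at h5
    omega
  have hcount2 : n ≤ Module.finrank ℂ (LinearMap.ker β) := by
    have hle : LinearMap.range α ≤ LinearMap.ker β := by
      rintro x ⟨v, rfl⟩
      exact hβα v
    have h6 := LinearMap.finrank_range_add_finrank_ker α
    rw [hαker, finrank_bot, hVfin] at h6
    have h7 := Submodule.finrank_mono hle
    omega
  have hrank : ∀ j : Fin (p + 1), (b j • M j - 1).rank = Module.finrank ℂ (W j) := by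
    intro j
    rfl
  rw [Finset.sum_congr rfl (fun j _ => hrank j), hsum_eq]
  omega
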